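/- arXiv:2208.02389 — 2 statements merged into one kernel-verified Lean document; each statement's English description precedes it below -/
import Mathlib

section
/- In the risk-aware linear bandit model, for any policy π the expected proxy regret satisfies E[R̂_π(T)] ≤ Σ_{a∈A} E[τ_a(T)]·(Δ_a + Γ_{a,*}²) + σ_{a*}², where Γ_{a,*} = μ_a − μ_{a*} and σ_{a*}² is the variance of the optimal action a*. -/
open MeasureTheory ProbabilityTheory Matrix Finset
open scoped BigOperators NNReal

noncomputable section

/-- The squared ℓ₂-norm of a vector in ℝ^d. -/
def sqNorm {d : ℕ} (a : Fin d → ℝ) : ℝ := ∑ i, a i ^ 2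

/-- The design matrix `∑_{a ∈ A} Q(a) · a aᵀ` of a weighting `Q` on `A`. -/
def designMat {d : ℕ} (A : Finset (Fin d → ℝ)) (Q : (Fin d → ℝ) → ℝ) :
    Matrix (Fin d) (Fin d) ℝ :=
  ∑ a ∈ A, Q a • vecMulVec a a

/-- The G-value `g(Q) = max_{a ∈ A} aᵀ (∑_{b ∈ A} Q(b) b bᵀ)⁻¹ a` of a design. -/
def gVal {d : ℕ} (A : Finset (Fin d → ℝ)) (Q : (Fin d → ℝ) → ℝ) : ℝ :=
  if h : A.Nonempty then A.sup' h fun a => a ⬝ᵥ ((designMat A Q)⁻¹ *ᵥ a) else 0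

/-- `Q` is a probability distribution supported on the finite action set `A`. -/
structure IsDesign {d : ℕ} (A : Finset (Fin d → ℝ)) (Q : (Fin d → ℝ) → ℝ) : Prop where
  nonneg : ∀ a, 0 ≤ Q a
  support : ∀ a, a ∉ A → Q a = 0
  sum_one : ∑ a ∈ A, Q a = 1

/-- `Q` is a G-optimal design on `A`: a probability distribution on `A`
minimizing the G-value. -/
structure IsGOptimal {d : ℕ} (A : Finset (Fin d → ℝ)) (Q : (Fin d → ℝ) → ℝ)
    extends IsDesign A Q : Prop where
  minimal : ∀ Q', IsDesign A Q' → gVal A Q ≤ gVal A Q'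

/-- The risk-aware linear bandit model. -/
structure BanditModel (d : ℕ) where
  /-- the finite action set `A ⊆ ℝ^d` -/
  A : Finset (Fin d → ℝ)
  A_nonempty : A.Nonempty
  /-- every action has ℓ₂-norm at most `1` -/
  norm_le : ∀ a ∈ A, sqNorm a ≤ 1
  /-- unknown mean parameter `θ*` -/
  θ : Fin d → ℝ
  /-- unknown variance parameter `φ*` -/
  φ : Fin d → ℝ
  /-- the known constant `ω > 0` -/
  ω : ℝ
  ω_pos : 0 < ω
  /-- `‖θ*‖₂ ≤ 1` -/
  θ_norm : sqNorm θ ≤ 1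
  /-- `‖φ*‖₂ ≤ ω` -/
  φ_norm : sqNorm φ ≤ ω ^ 2
  /-- `σ²_min` -/
  σ2min : ℝ
  /-- `σ²_max` -/
  σ2max : ℝ
  /-- `f(⟨φ*, a⟩) = ⟨φ*, a⟩ + ω ∈ [σ²_min, σ²_max]` for all actions -/
  var_mem : ∀ a ∈ A, φ ⬝ᵥ a + ω ∈ Set.Icc σ2min σ2max
  /-- risk tolerance `ρ ≥ 0` -/
  ρ : ℝ
  ρ_nonneg : 0 ≤ ρ

namespace BanditModel

variable {d : ℕ} (M : BanditModel d)

/-- expected reward `μ_a = ⟨a, θ*⟩` -/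
def mean (a : Fin d → ℝ) : ℝ := a ⬝ᵥ M.θ

/-- reward variance `σ_a² = ⟨φ*, a⟩ + ω` -/
def var (a : Fin d → ℝ) : ℝ := M.φ ⬝ᵥ a + M.ω

/-- mean-variance value `σ_a² − ρ μ_a` -/
def mv (a : Fin d → ℝ) : ℝ := M.var a - M.ρ * M.mean a

/-- mean-reward gap `Γ_{a,b} = μ_a − μ_b` -/
def gap (a b : Fin d → ℝ) : ℝ := M.mean a - M.mean b

end BanditModel

/-- The mean-variance objective `ξ(T)` of the reward sequence `x` over horizon `T`:
`∑_{t<T} (x_t − (1/T) ∑_{s<T} x_s)² − ρ ∑_{t<T} x_t`. -/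
def mvObj (ρ : ℝ) (T : ℕ) (x : ℕ → ℝ) : ℝ :=
  (∑ t ∈ Finset.range T, (x t - (∑ s ∈ Finset.range T, x s) / T) ^ 2)
    - ρ * ∑ t ∈ Finset.range T, x t

/-- The pre-sampled noise table `η` consists of independent Gaussian noises
`η_t(a) ∼ N(0, f(⟨φ*, a⟩))`. -/
structure IsNoise {d : ℕ} (M : BanditModel d) {Ω : Type} [MeasurableSpace Ω]
    (P : Measure Ω) (η : ℕ → (Fin d → ℝ) → Ω → ℝ) : Prop where
  meas : ∀ t a, Measurable (η t a)
  gauss : ∀ t, ∀ a ∈ M.A,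
    Measure.map (η t a) P = gaussianReal 0 (Real.toNNReal (M.var a))
  indep : iIndepFun
    (fun p : ℕ × {a // a ∈ M.A} => η p.1 p.2.1) P

/-- number of times action `a` is played by `act` during the first `T` rounds -/
def playCount {d : ℕ} {Ω : Type} (act : ℕ → Ω → Fin d → ℝ) (T : ℕ)
    (a : Fin d → ℝ) (ω : Ω) : ℝ :=
  ∑ t ∈ Finset.range T, if act t ω = a then (1 : ℝ) else 0

/-- `n_a = ⌈C² d² log d log²(1/δ) g(Q) Q(a) / ε²⌉`: the exploration counts of RISE. -/
def riseCount {d : ℕ} (A : Finset (Fin d → ℝ)) (Q : (Fin d → ℝ) → ℝ)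
    (C ε δ : ℝ) (a : Fin d → ℝ) : ℕ :=
  ⌈C ^ 2 * d ^ 2 * Real.log d * Real.log (1 / δ) ^ 2 * gVal A Q * Q a / ε ^ 2⌉₊

/-- the design matrix `V_n = ∑_{s<n} A_s A_sᵀ` accumulated during exploration -/
def riseV {d : ℕ} (plan : ℕ → Fin d → ℝ) (n : ℕ) : Matrix (Fin d) (Fin d) ℝ :=
  ∑ s ∈ Finset.range n, vecMulVec (plan s) (plan s)

/-- the least-squares estimate `θ̂_n = V_n⁻¹ ∑_{s<n} X_s A_s` -/
def riseTheta {d : ℕ} {Ω : Type} (plan : ℕ → Fin d → ℝ) (n : ℕ)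
    (X : ℕ → Ω → ℝ) (ω : Ω) : Fin d → ℝ :=
  (riseV plan n)⁻¹ *ᵥ ∑ s ∈ Finset.range n, X s ω • plan s

/-- the least-squares estimate
`φ̂_n = V_n⁻¹ ∑_{s<n} f⁻¹((X_s − ⟨θ̂_n, A_s⟩)²) A_s`, where `f⁻¹(y) = y − ω` -/
def risePhi {d : ℕ} {Ω : Type} (M : BanditModel d) (plan : ℕ → Fin d → ℝ) (n : ℕ)
    (X : ℕ → Ω → ℝ) (ω : Ω) : Fin d → ℝ :=
  (riseV plan n)⁻¹ *ᵥ
    ∑ s ∈ Finset.range n,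
      ((X s ω - plan s ⬝ᵥ riseTheta plan n X ω) ^ 2 - M.ω) • plan s

/-- A (history-adapted) policy: at each time `t` it maps the history
`(A_1, X_1, …, A_t, X_t)` to the next action. -/
def Policy (d : ℕ) : Type :=
  (t : ℕ) → (Fin t → (Fin d → ℝ) × ℝ) → (Fin d → ℝ)

/-- The history of action/reward pairs generated by running policy `π` against
the noise table `η` in environment with mean parameter `θ`. -/
def polHist {d : ℕ} {Ω : Type} (θ : Fin d → ℝ)
    (η : ℕ → (Fin d → ℝ) → Ω → ℝ) (π : Policy d) (ω : Ω) :
    (t : ℕ) → Fin t → (Fin d → ℝ) × ℝ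
  | 0 => fun i => i.elim0
  | t + 1 =>
      Fin.snoc (polHist θ η π ω t)
        (π t (polHist θ η π ω t),
          π t (polHist θ η π ω t) ⬝ᵥ θ + η t (π t (polHist θ η π ω t)) ω)

/-- The action played by policy `π` at time `t`. -/
def polAct {d : ℕ} {Ω : Type} (θ : Fin d → ℝ)
    (η : ℕ → (Fin d → ℝ) → Ω → ℝ) (π : Policy d) (ω : Ω) (t : ℕ) : Fin d → ℝ :=
  π t (polHist θ η π ω t)

/-- The reward received by policy `π` at time `t`. -/
def polX {d : ℕ} {Ω : Type} (θ : Fin d → ℝ)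
    (η : ℕ → (Fin d → ℝ) → Ω → ℝ) (π : Policy d) (ω : Ω) (t : ℕ) : ℝ :=
  polAct θ η π ω t ⬝ᵥ θ + η t (polAct θ η π ω t) ω

section GaussAux
open Real
open scoped ENNReal
lemma myInt_sq_mul_exp {b : ℝ} (hb : 0 < b) :
    Integrable (fun x : ℝ => x ^ 2 * Real.exp (-b * x ^ 2)) := by
  refine (integrable_rpow_mul_exp_neg_mul_sq hb (s := 2) (by norm_num)).congr
    (Filter.Eventually.of_forall fun x => ?_)
  show x ^ ((2:ℕ):ℝ) * Real.exp (-b * x ^ 2) = _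
  rw [Real.rpow_natCast]

lemma myIntegral_sq_mul_exp {b : ℝ} (hb : 0 < b) :
    ∫ x : ℝ, x ^ 2 * Real.exp (-b * x ^ 2) = (2 * b)⁻¹ * Real.sqrt (π / b) := by
  have hu : ∀ x : ℝ, HasDerivAt (fun y : ℝ => y) 1 x := fun x => hasDerivAt_id x
  have hv : ∀ x : ℝ, HasDerivAt (fun y : ℝ => -(2 * b)⁻¹ * Real.exp (-b * y ^ 2))
      (x * Real.exp (-b * x ^ 2)) x := by
    intro x
    have h1 : HasDerivAt (fun y : ℝ => -b * y ^ 2) (-b * (2 * x ^ 1)) x :=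
      (hasDerivAt_pow 2 x).const_mul (-b)
    have h2 := (h1.exp).const_mul (-(2 * b)⁻¹)
    refine h2.congr_deriv ?_
    field_simp
  have huv' : Integrable ((fun y : ℝ => y) * fun x => x * Real.exp (-b * x ^ 2)) := by
    refine (myInt_sq_mul_exp hb).congr (Filter.Eventually.of_forall fun x => ?_)
    simp [Pi.mul_apply]; ring
  have hu'v : Integrable ((fun _ : ℝ => (1:ℝ)) * fun y : ℝ => -(2 * b)⁻¹ * Real.exp (-b * y ^ 2)) := by
    refine (((integrable_exp_neg_mul_sq hb).const_mul (-(2 * b)⁻¹)).congr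
      (Filter.Eventually.of_forall fun x => ?_))
    simp [Pi.mul_apply]
  have huv : Integrable ((fun y : ℝ => y) * fun y : ℝ => -(2 * b)⁻¹ * Real.exp (-b * y ^ 2)) := by
    refine ((integrable_mul_exp_neg_mul_sq hb).const_mul (-(2 * b)⁻¹)).congr
      (Filter.Eventually.of_forall fun x => ?_)
    simp [Pi.mul_apply]; ring
  have key := integral_mul_deriv_eq_deriv_mul_of_integrable (fun x _ => hu x) (fun x _ => hv x) huv' hu'v huv
  have h3 : ∫ x : ℝ, x * (x * Real.exp (-b * x ^ 2)) = ∫ x : ℝ, x ^ 2 * Real.exp (-b * x ^ 2) := by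
    congr 1; funext x; ring
  rw [h3] at key
  rw [key]
  have h4 : ∫ x : ℝ, (1 : ℝ) * (-(2 * b)⁻¹ * Real.exp (-b * x ^ 2))
      = -(2 * b)⁻¹ * ∫ x : ℝ, Real.exp (-b * x ^ 2) := by
    simp only [one_mul]; exact integral_const_mul _ _
  rw [h4, integral_gaussian]
  ring

lemma myPdf_eq (v : ℝ≥0) (x : ℝ) :
    gaussianPDFReal 0 v x = (Real.sqrt (2 * π * v))⁻¹ * Real.exp (-(2 * (v:ℝ))⁻¹ * x ^ 2) := by
  rw [gaussianPDFReal, sub_zero]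
  by_cases hv : (v : ℝ) = 0
  · simp [hv]
  · congr 1
    field_simp

lemma myPdf_even (v : ℝ≥0) (x : ℝ) : gaussianPDFReal 0 v (-x) = gaussianPDFReal 0 v x := by
  rw [myPdf_eq, myPdf_eq, Even.neg_pow even_two]

lemma myIntegrable_dirac {f : ℝ → ℝ} (hf : Measurable f) (a : ℝ) :
    Integrable f (Measure.dirac a) := by
  refine ⟨hf.aestronglyMeasurable, ?_⟩
  rw [HasFiniteIntegral, lintegral_dirac]
  exact ENNReal.coe_lt_top

lemma myGauss_int (v : ℝ≥0) (hv : v ≠ 0) (g : ℝ → ℝ) :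
    ∫ x, g x ∂(gaussianReal 0 v) = ∫ x, gaussianPDFReal 0 v x * g x := by
  rw [gaussianReal_of_var_ne_zero 0 hv]
  have hd : gaussianPDF 0 v = fun x => ((Real.toNNReal (gaussianPDFReal 0 v x) : ℝ≥0) : ℝ≥0∞) :=
    funext fun x => rfl
  rw [hd, integral_withDensity_eq_integral_smul
    ((measurable_gaussianPDFReal 0 v).real_toNNReal) g]
  congr 1; funext x
  simp [NNReal.smul_def, Real.coe_toNNReal _ (gaussianPDFReal_nonneg 0 v x)]

lemma myGauss_integrable (v : ℝ≥0) (hv : v ≠ 0) (g : ℝ → ℝ)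
    (h : Integrable (fun x => gaussianPDFReal 0 v x * g x) volume) :
    Integrable g (gaussianReal 0 v) := by
  rw [gaussianReal_of_var_ne_zero 0 hv]
  have hd : gaussianPDF 0 v = fun x => ((Real.toNNReal (gaussianPDFReal 0 v x) : ℝ≥0) : ℝ≥0∞) :=
    funext fun x => rfl
  rw [hd, integrable_withDensity_iff_integrable_smul
    ((measurable_gaussianPDFReal 0 v).real_toNNReal)]
  refine h.congr (Filter.Eventually.of_forall fun x => ?_)
  simp [NNReal.smul_def, Real.coe_toNNReal _ (gaussianPDFReal_nonneg 0 v x)]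

lemma myGauss_integrable_sq (v : ℝ≥0) : Integrable (fun x => x ^ 2) (gaussianReal 0 v) := by
  by_cases hv : v = 0
  · rw [hv, gaussianReal_zero_var]
    exact myIntegrable_dirac (by fun_prop) 0
  · have hvpos : (0:ℝ) < v := by exact_mod_cast pos_iff_ne_zero.mpr hv
    have hb : (0:ℝ) < (2 * (v:ℝ))⁻¹ := by positivity
    refine myGauss_integrable v hv _ ?_
    refine ((myInt_sq_mul_exp hb).const_mul ((Real.sqrt (2 * π * v))⁻¹)).congr
      (Filter.Eventually.of_forall fun x => ?_)
    simp only []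
    rw [myPdf_eq]; ring

lemma myGauss_integrable_id (v : ℝ≥0) : Integrable (fun x => x) (gaussianReal 0 v) := by
  by_cases hv : v = 0
  · rw [hv, gaussianReal_zero_var]
    exact myIntegrable_dirac (by fun_prop) 0
  · have hvpos : (0:ℝ) < v := by exact_mod_cast pos_iff_ne_zero.mpr hv
    have hb : (0:ℝ) < (2 * (v:ℝ))⁻¹ := by positivity
    refine myGauss_integrable v hv _ ?_
    refine (((integrable_mul_exp_neg_mul_sq hb).const_mul ((Real.sqrt (2 * π * v))⁻¹)).congr
      (Filter.Eventually.of_forall fun x => ?_))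
    simp only []
    rw [myPdf_eq]; ring

lemma myGauss_int_id (v : ℝ≥0) : ∫ x, x ∂(gaussianReal 0 v) = 0 := by
  by_cases hv : v = 0
  · rw [hv, gaussianReal_zero_var, integral_dirac]
  · rw [myGauss_int v hv]
    have hodd : ∫ x : ℝ, gaussianPDFReal 0 v x * x
        = - ∫ x : ℝ, gaussianPDFReal 0 v x * x := by
      nth_rewrite 1 [← integral_neg_eq_self (fun x => gaussianPDFReal 0 v x * x) volume]
      rw [← integral_neg]
      congr 1; funext x
      rw [myPdf_even]; ring
    linarith

lemma myGauss_int_sq (v : ℝ≥0) : ∫ x, x ^ 2 ∂(gaussianReal 0 v) = v := by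
  by_cases hv : v = 0
  · rw [hv, gaussianReal_zero_var, integral_dirac]
    simp [hv]
  · have hvpos : (0:ℝ) < v := by exact_mod_cast pos_iff_ne_zero.mpr hv
    have hb : (0:ℝ) < (2 * (v:ℝ))⁻¹ := by positivity
    rw [myGauss_int v hv]
    have h1 : ∫ x : ℝ, gaussianPDFReal 0 v x * x ^ 2
        = (Real.sqrt (2 * π * v))⁻¹ * ∫ x : ℝ, x ^ 2 * Real.exp (-(2 * (v:ℝ))⁻¹ * x ^ 2) := by
      rw [← integral_const_mul]
      congr 1; funext x; rw [myPdf_eq]; ring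
    rw [h1, myIntegral_sq_mul_exp hb]
    have h2 : π / ((2 * (v:ℝ))⁻¹) = 2 * π * v := by field_simp
    have h3 : ((2 : ℝ) * (2 * (v:ℝ))⁻¹)⁻¹ = v := by field_simp
    rw [h2, h3]
    have h4 : (0:ℝ) < Real.sqrt (2 * π * v) := Real.sqrt_pos.mpr (by positivity)
    field_simp

end GaussAux

section ModelAux

variable {d : ℕ} (M : BanditModel d)

lemma myVar_nonneg {a : Fin d → ℝ} (ha : a ∈ M.A) : 0 ≤ M.var a := by
  have hcs := Finset.sum_mul_sq_le_sq_mul_sq Finset.univ M.φ a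
  have h1 : (M.φ ⬝ᵥ a) ^ 2 ≤ M.ω ^ 2 * 1 := by
    have h2 : (0:ℝ) ≤ ∑ i, M.φ i ^ 2 := Finset.sum_nonneg fun i _ => sq_nonneg _
    have h3 : (0:ℝ) ≤ ∑ i, a i ^ 2 := Finset.sum_nonneg fun i _ => sq_nonneg _
    have h4 := M.φ_norm
    have h5 := M.norm_le a ha
    rw [sqNorm] at h4 h5
    calc (M.φ ⬝ᵥ a) ^ 2 = (∑ i, M.φ i * a i) ^ 2 := rfl
      _ ≤ (∑ i, M.φ i ^ 2) * ∑ i, a i ^ 2 := hcs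
      _ ≤ M.ω ^ 2 * 1 := by
          apply mul_le_mul h4 h5 h3 (sq_nonneg _)
  have hω := M.ω_pos
  rw [BanditModel.var]
  nlinarith [sq_nonneg (M.φ ⬝ᵥ a + M.ω)]

variable {M} {Ω : Type} [MeasurableSpace Ω] {P : Measure Ω} [IsProbabilityMeasure P]
  {η : ℕ → (Fin d → ℝ) → Ω → ℝ}

lemma myInt_eta (hη : IsNoise M P η) (t : ℕ) {a : Fin d → ℝ} (ha : a ∈ M.A) :
    ∫ ω, η t a ω ∂P = 0 := by
  have h := integral_map (μ := P) (hη.meas t a).aemeasurable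
    (f := fun x : ℝ => x) measurable_id.aestronglyMeasurable
  rw [hη.gauss t a ha] at h
  rw [← h, myGauss_int_id]

lemma myInt_eta_sq (hη : IsNoise M P η) (t : ℕ) {a : Fin d → ℝ} (ha : a ∈ M.A) :
    ∫ ω, η t a ω ^ 2 ∂P = M.var a := by
  have h := integral_map (μ := P) (hη.meas t a).aemeasurable
    (f := fun x : ℝ => x ^ 2) (by fun_prop)
  rw [hη.gauss t a ha] at h
  rw [← h, myGauss_int_sq, Real.coe_toNNReal _ (myVar_nonneg M ha)]

lemma myIntegrable_eta (hη : IsNoise M P η) (t : ℕ) {a : Fin d → ℝ} (ha : a ∈ M.A) :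
    Integrable (η t a) P := by
  have h := (integrable_map_measure (μ := P) (f := η t a) (g := fun x : ℝ => x)
    measurable_id.aestronglyMeasurable (hη.meas t a).aemeasurable)
  rw [hη.gauss t a ha] at h
  exact h.mp (myGauss_integrable_id _)

lemma myIntegrable_eta_sq (hη : IsNoise M P η) (t : ℕ) {a : Fin d → ℝ} (ha : a ∈ M.A) :
    Integrable (fun ω => η t a ω ^ 2) P := by
  have h := (integrable_map_measure (μ := P) (f := η t a) (g := fun x : ℝ => x ^ 2)
    (by fun_prop) (hη.meas t a).aemeasurable)
  rw [hη.gauss t a ha] at h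
  exact h.mp (myGauss_integrable_sq _)

lemma myMemL2_eta (hη : IsNoise M P η) (t : ℕ) {a : Fin d → ℝ} (ha : a ∈ M.A) :
    MemLp (η t a) 2 P :=
  (memLp_two_iff_integrable_sq (hη.meas t a).aestronglyMeasurable).mpr
    (myIntegrable_eta_sq hη t ha)

end ModelAux


section HistAux

variable {d : ℕ}

/-- auxiliary: the history as a measurable function of the pre-sampled noises -/
def histFun (M : BanditModel d) (π : Policy d) :
    (t : ℕ) → (Fin t → {a // a ∈ M.A} → ℝ) → (Fin t → (Fin d → ℝ) × ℝ)
  | 0 => fun _ i => i.elim0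
  | (t+1) => fun v =>
      Fin.snoc (histFun M π t fun s => v s.castSucc)
        (π t (histFun M π t fun s => v s.castSucc),
          (π t (histFun M π t fun s => v s.castSucc)) ⬝ᵥ M.θ +
          ∑ b ∈ M.A.attach,
            if π t (histFun M π t fun s => v s.castSucc) = (b : Fin d → ℝ)
              then v (Fin.last t) b else 0)

lemma mySum_attach_pick (M : BanditModel d) {x : Fin d → ℝ} (hx : x ∈ M.A)
    (f : {a // a ∈ M.A} → ℝ) :
    (∑ b ∈ M.A.attach, if x = (b : Fin d → ℝ) then f b else 0) = f ⟨x, hx⟩ := by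
  rw [Finset.sum_eq_single (⟨x, hx⟩ : {a // a ∈ M.A})]
  · simp
  · intro b _ hb
    rw [if_neg]
    intro h
    exact hb (Subtype.ext h.symm)
  · intro h
    exact absurd (M.A.mem_attach _) h

lemma myPolHist_eq (M : BanditModel d) {Ω : Type} (η : ℕ → (Fin d → ℝ) → Ω → ℝ)
    (π : Policy d) (hπ_mem : ∀ t h, π t h ∈ M.A) (ω : Ω) :
    ∀ t, polHist M.θ η π ω t = histFun M π t (fun s b => η (s : ℕ) (b : Fin d → ℝ) ω)
  | 0 => by funext i; exact i.elim0
  | (t+1) => by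
      have IH := myPolHist_eq M η π hπ_mem ω t
      show Fin.snoc _ _ = _
      simp only [histFun]
      have hres : (fun (s : Fin t) =>
          (fun (s : Fin (t+1)) (b : {a // a ∈ M.A}) => η (s : ℕ) (b : Fin d → ℝ) ω) s.castSucc)
          = fun (s : Fin t) (b : {a // a ∈ M.A}) => η (s : ℕ) (b : Fin d → ℝ) ω := by
        funext s b
        simp
      rw [hres, ← IH]
      congr 1
      have hpick := mySum_attach_pick M (hπ_mem t (polHist M.θ η π ω t))
        (fun b => η t (b : Fin d → ℝ) ω)
      rw [show ((Fin.last t : Fin (t+1)) : ℕ) = t from rfl]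
      rw [hpick]

lemma myMeasurable_histFun (M : BanditModel d) (π : Policy d)
    (hπ : ∀ t, Measurable (π t)) : ∀ t, Measurable (histFun M π t)
  | 0 => measurable_const
  | (t+1) => by
      have IH := myMeasurable_histFun M π hπ t
      have hres : Measurable (fun v : Fin (t+1) → {a // a ∈ M.A} → ℝ =>
          (fun s : Fin t => v s.castSucc)) :=
        measurable_pi_lambda _ fun s => measurable_pi_apply _
      have hH : Measurable (fun v : Fin (t+1) → {a // a ∈ M.A} → ℝ =>
          histFun M π t (fun s : Fin t => v s.castSucc)) := IH.comp hres
      have hact : Measurable (fun v : Fin (t+1) → {a // a ∈ M.A} → ℝ =>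
          π t (histFun M π t (fun s : Fin t => v s.castSucc))) := (hπ t).comp hH
      have hdot : Measurable (fun v : Fin (t+1) → {a // a ∈ M.A} → ℝ =>
          (π t (histFun M π t fun s => v s.castSucc)) ⬝ᵥ M.θ) := by
        simp only [dotProduct]
        exact Finset.measurable_sum _ fun i _ =>
          ((measurable_pi_apply i).comp hact).mul_const _
      have hnoise : Measurable (fun v : Fin (t+1) → {a // a ∈ M.A} → ℝ =>
          ∑ b ∈ M.A.attach,
            if π t (histFun M π t fun s => v s.castSucc) = (b : Fin d → ℝ)
              then v (Fin.last t) b else 0) := by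
        apply Finset.measurable_sum
        intro b _
        refine Measurable.ite ?_
          ((measurable_pi_apply b).comp (measurable_pi_apply (Fin.last t))) measurable_const
        exact hact (measurableSet_singleton ((b : Fin d → ℝ)))
      simp only [histFun]
      rw [measurable_pi_iff]
      intro i
      induction i using Fin.lastCases with
      | last =>
          simp only [Fin.snoc_last]
          exact hact.prodMk (hdot.add hnoise)
      | cast i =>
          simp only [Fin.snoc_castSucc]
          exact (measurable_pi_apply i).comp hH

variable {M : BanditModel d} {Ω : Type} [MeasurableSpace Ω] {P : Measure Ω}
  {η : ℕ → (Fin d → ℝ) → Ω → ℝ} {π : Policy d}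

lemma myMeasurable_polAct (hη : IsNoise M P η) (hπ_mem : ∀ t h, π t h ∈ M.A)
    (hπ_meas : ∀ t, Measurable (π t)) (t : ℕ) :
    Measurable (fun ω => polAct M.θ η π ω t) := by
  have h1 : (fun ω => polAct M.θ η π ω t)
      = fun ω => π t (histFun M π t (fun s b => η (s : ℕ) (b : Fin d → ℝ) ω)) := by
    funext ω
    rw [polAct, myPolHist_eq M η π hπ_mem ω t]
  rw [h1]
  exact (hπ_meas t).comp ((myMeasurable_histFun M π hπ_meas t).comp
    (measurable_pi_lambda _ fun s => measurable_pi_lambda _ fun b => hη.meas _ _))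

lemma myIndep_act (hη : IsNoise M P η) (hπ_mem : ∀ t h, π t h ∈ M.A)
    (hπ_meas : ∀ t, Measurable (π t)) (t : ℕ) {a : Fin d → ℝ} (ha : a ∈ M.A) :
    IndepFun (fun ω => polAct M.θ η π ω t) (η t a) P := by
  classical
  set S : Finset (ℕ × {b // b ∈ M.A}) := (Finset.range t) ×ˢ Finset.univ with hS
  set Tt : Finset (ℕ × {b // b ∈ M.A}) := {(t, ⟨a, ha⟩)} with hT
  have hdisj : Disjoint S Tt := by
    rw [hT, Finset.disjoint_singleton_right, hS]
    simp [Finset.mem_product]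
  have hbase := hη.indep.indepFun_finset S Tt hdisj (fun p => hη.meas p.1 p.2.1)
  let φL : ((i : S) → ℝ) → (Fin d → ℝ) := fun w =>
    π t (histFun M π t (fun s b =>
      w ⟨((s : ℕ), b), by simp [hS, Finset.mem_product, s.isLt]⟩))
  let φR : ((i : Tt) → ℝ) → ℝ := fun w => w ⟨(t, ⟨a, ha⟩), Finset.mem_singleton_self _⟩
  have hφL : Measurable φL :=
    (hπ_meas t).comp ((myMeasurable_histFun M π hπ_meas t).comp
      (measurable_pi_lambda _ fun s => measurable_pi_lambda _ fun b => measurable_pi_apply _))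
  have hφR : Measurable φR := measurable_pi_apply _
  have heqL : (fun ω => polAct M.θ η π ω t)
      = φL ∘ (fun ω (i : S) => (fun p : ℕ × {b // b ∈ M.A} => η p.1 p.2.1) (i : ℕ × _) ω) := by
    funext ω
    simp only [Function.comp_apply, φL, polAct]
    rw [myPolHist_eq M η π hπ_mem ω t]
  have heqR : η t a
      = φR ∘ (fun ω (i : Tt) => (fun p : ℕ × {b // b ∈ M.A} => η p.1 p.2.1) (i : ℕ × _) ω) := rfl
  rw [heqL, heqR]
  exact hbase.comp hφL hφR

lemma myIndep_ind (hη : IsNoise M P η) (hπ_mem : ∀ t h, π t h ∈ M.A)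
    (hπ_meas : ∀ t, Measurable (π t)) (t : ℕ) {a : Fin d → ℝ} (ha : a ∈ M.A) (k : ℕ) :
    IndepFun (fun ω => if polAct M.θ η π ω t = a then (1:ℝ) else 0)
      (fun ω => η t a ω ^ k) P := by
  have hf : Measurable (fun v : Fin d → ℝ => if v = a then (1:ℝ) else 0) :=
    Measurable.ite (measurableSet_eq) measurable_const measurable_const
  have hg : Measurable (fun x : ℝ => x ^ k) := measurable_id.pow_const k
  exact (myIndep_act hη hπ_mem hπ_meas t ha).comp hf hg

end HistAux


section RoundAux

variable {d : ℕ} {M : BanditModel d} {Ω : Type} [MeasurableSpace Ω] {P : Measure Ω}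
  [IsProbabilityMeasure P] {η : ℕ → (Fin d → ℝ) → Ω → ℝ} {π : Policy d}

/-- indicator that the policy plays `a` at time `t` -/
def indA (M : BanditModel d) (η : ℕ → (Fin d → ℝ) → Ω → ℝ) (π : Policy d)
    (t : ℕ) (a : Fin d → ℝ) : Ω → ℝ := fun ω => if polAct M.θ η π ω t = a then (1:ℝ) else 0

lemma myIndA_mul (hη : IsNoise M P η) (hπ_mem : ∀ t h, π t h ∈ M.A)
    (hπ_meas : ∀ t, Measurable (π t)) (t : ℕ) (a : Fin d → ℝ) {f : Ω → ℝ}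
    (hf : Integrable f P) : Integrable (fun ω => indA M η π t a ω * f ω) P := by
  have hset : MeasurableSet {ω | polAct M.θ η π ω t = a} :=
    (myMeasurable_polAct hη hπ_mem hπ_meas t) (measurableSet_singleton a)
  have h1 : (fun ω => indA M η π t a ω * f ω)
      = Set.indicator {ω | polAct M.θ η π ω t = a} f := by
    funext ω
    by_cases h : polAct M.θ η π ω t = a <;> simp [indA, h, Set.indicator_apply]
  rw [h1]
  exact hf.indicator hset

lemma myIndA_int (hη : IsNoise M P η) (hπ_mem : ∀ t h, π t h ∈ M.A)
    (hπ_meas : ∀ t, Measurable (π t)) (t : ℕ) (a : Fin d → ℝ) :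
    Integrable (indA M η π t a) P := by
  have := myIndA_mul hη hπ_mem hπ_meas t a (integrable_const (1:ℝ))
  simpa using this

lemma myIndA_eta (hη : IsNoise M P η) (hπ_mem : ∀ t h, π t h ∈ M.A)
    (hπ_meas : ∀ t, Measurable (π t)) (t : ℕ) {a : Fin d → ℝ} (ha : a ∈ M.A) :
    ∫ ω, indA M η π t a ω * η t a ω ∂P = 0 := by
  have hind := myIndep_ind hη hπ_mem hπ_meas t ha 1
  simp only [pow_one] at hind
  calc ∫ ω, indA M η π t a ω * η t a ω ∂P
      = integral P ((fun ω => if polAct M.θ η π ω t = a then (1:ℝ) else 0) * fun ω => η t a ω) :=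
        rfl
    _ = (∫ ω, indA M η π t a ω ∂P) * ∫ ω, η t a ω ∂P :=
        hind.integral_mul_eq_mul_integral (myIndA_int hη hπ_mem hπ_meas t a).aestronglyMeasurable
          (myIntegrable_eta hη t ha).aestronglyMeasurable
    _ = 0 := by rw [myInt_eta hη t ha, mul_zero]

lemma myIndA_eta_sq (hη : IsNoise M P η) (hπ_mem : ∀ t h, π t h ∈ M.A)
    (hπ_meas : ∀ t, Measurable (π t)) (t : ℕ) {a : Fin d → ℝ} (ha : a ∈ M.A) :
    ∫ ω, indA M η π t a ω * η t a ω ^ 2 ∂P = (∫ ω, indA M η π t a ω ∂P) * M.var a := by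
  have hind := myIndep_ind hη hπ_mem hπ_meas t ha 2
  calc ∫ ω, indA M η π t a ω * η t a ω ^ 2 ∂P
      = integral P ((fun ω => if polAct M.θ η π ω t = a then (1:ℝ) else 0)
          * fun ω => η t a ω ^ 2) := rfl
    _ = (∫ ω, indA M η π t a ω ∂P) * ∫ ω, η t a ω ^ 2 ∂P :=
        hind.integral_mul_eq_mul_integral (myIndA_int hη hπ_mem hπ_meas t a).aestronglyMeasurable
          (myIntegrable_eta_sq hη t ha).aestronglyMeasurable
    _ = (∫ ω, indA M η π t a ω ∂P) * M.var a := by rw [myInt_eta_sq hη t ha]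

lemma myX_eq (hπ_mem : ∀ t h, π t h ∈ M.A) (t : ℕ) (ω : Ω) :
    polX M.θ η π ω t = ∑ a ∈ M.A, indA M η π t a ω * (M.mean a + η t a ω) := by
  have h1 : ∀ a ∈ M.A, indA M η π t a ω * (M.mean a + η t a ω)
      = if polAct M.θ η π ω t = a then (M.mean a + η t a ω) else 0 := by
    intro a _
    by_cases h : polAct M.θ η π ω t = a <;> simp [indA, h]
  rw [Finset.sum_congr rfl h1,
    Finset.sum_ite_eq M.A (polAct M.θ η π ω t) (fun a => M.mean a + η t a ω)]
  have hmem : polAct M.θ η π ω t ∈ M.A := hπ_mem t _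
  rw [if_pos hmem]
  rfl

lemma myX_sq_eq (hπ_mem : ∀ t h, π t h ∈ M.A) (t : ℕ) (ω : Ω) :
    polX M.θ η π ω t ^ 2 = ∑ a ∈ M.A, indA M η π t a ω * (M.mean a + η t a ω) ^ 2 := by
  have h1 : ∀ a ∈ M.A, indA M η π t a ω * (M.mean a + η t a ω) ^ 2
      = if polAct M.θ η π ω t = a then (M.mean a + η t a ω) ^ 2 else 0 := by
    intro a _
    by_cases h : polAct M.θ η π ω t = a <;> simp [indA, h]
  rw [Finset.sum_congr rfl h1,
    Finset.sum_ite_eq M.A (polAct M.θ η π ω t) (fun a => (M.mean a + η t a ω) ^ 2)]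
  have hmem : polAct M.θ η π ω t ∈ M.A := hπ_mem t _
  rw [if_pos hmem]
  rfl

lemma myIndA_sum (hπ_mem : ∀ t h, π t h ∈ M.A) (t : ℕ) (ω : Ω) :
    ∑ a ∈ M.A, indA M η π t a ω = 1 := by
  have : ∀ a ∈ M.A, indA M η π t a ω = if polAct M.θ η π ω t = a then (1:ℝ) else 0 :=
    fun a _ => rfl
  rw [Finset.sum_congr rfl this,
    Finset.sum_ite_eq M.A (polAct M.θ η π ω t) (fun _ => (1:ℝ))]
  have hmem : polAct M.θ η π ω t ∈ M.A := hπ_mem t _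
  rw [if_pos hmem]

lemma myX_memL2 (hη : IsNoise M P η) (hπ_mem : ∀ t h, π t h ∈ M.A)
    (hπ_meas : ∀ t, Measurable (π t)) (t : ℕ) :
    MemLp (fun ω => polX M.θ η π ω t) 2 P := by
  have h1 : (fun ω => polX M.θ η π ω t)
      = fun ω => ∑ a ∈ M.A, indA M η π t a ω * (M.mean a + η t a ω) := by
    funext ω; exact myX_eq hπ_mem t ω
  rw [h1]
  apply memLp_finset_sum
  intro a ha
  have hset : MeasurableSet {ω | polAct M.θ η π ω t = a} :=
    (myMeasurable_polAct hη hπ_mem hπ_meas t) (measurableSet_singleton a)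
  have h2 : (fun ω => indA M η π t a ω * (M.mean a + η t a ω))
      = Set.indicator {ω | polAct M.θ η π ω t = a} (fun ω => M.mean a + η t a ω) := by
    funext ω
    by_cases h : polAct M.θ η π ω t = a <;> simp [indA, h, Set.indicator_apply]
  rw [h2]
  exact ((memLp_const (M.mean a)).add (myMemL2_eta hη t ha)).indicator hset

lemma myIndA_mean_eta (hη : IsNoise M P η) (hπ_mem : ∀ t h, π t h ∈ M.A)
    (hπ_meas : ∀ t, Measurable (π t)) (t : ℕ) {a : Fin d → ℝ} (ha : a ∈ M.A) :
    Integrable (fun ω => indA M η π t a ω * (M.mean a + η t a ω)) P :=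
  myIndA_mul hη hπ_mem hπ_meas t a ((integrable_const (M.mean a)).add (myIntegrable_eta hη t ha))

lemma myIntX (hη : IsNoise M P η) (hπ_mem : ∀ t h, π t h ∈ M.A)
    (hπ_meas : ∀ t, Measurable (π t)) (t : ℕ) :
    ∫ ω, polX M.θ η π ω t ∂P = ∑ a ∈ M.A, (∫ ω, indA M η π t a ω ∂P) * M.mean a := by
  have h1 : (fun ω => polX M.θ η π ω t)
      = fun ω => ∑ a ∈ M.A, indA M η π t a ω * (M.mean a + η t a ω) :=
    funext fun ω => myX_eq hπ_mem t ω
  rw [h1, integral_finset_sum _ (fun a ha => myIndA_mean_eta hη hπ_mem hπ_meas t ha)]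
  refine Finset.sum_congr rfl fun a ha => ?_
  have h2 : (fun ω => indA M η π t a ω * (M.mean a + η t a ω))
      = fun ω => M.mean a * indA M η π t a ω + indA M η π t a ω * η t a ω := by
    funext ω; ring
  rw [h2, integral_add ((myIndA_int hη hπ_mem hπ_meas t a).const_mul _)
      (myIndA_mul hη hπ_mem hπ_meas t a (myIntegrable_eta hη t ha)),
    integral_const_mul, myIndA_eta hη hπ_mem hπ_meas t ha, add_zero, mul_comm]

lemma myIntX_sq (hη : IsNoise M P η) (hπ_mem : ∀ t h, π t h ∈ M.A)
    (hπ_meas : ∀ t, Measurable (π t)) (t : ℕ) :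
    ∫ ω, polX M.θ η π ω t ^ 2 ∂P
      = ∑ a ∈ M.A, (∫ ω, indA M η π t a ω ∂P) * (M.mean a ^ 2 + M.var a) := by
  have h1 : (fun ω => polX M.θ η π ω t ^ 2)
      = fun ω => ∑ a ∈ M.A, indA M η π t a ω * (M.mean a + η t a ω) ^ 2 :=
    funext fun ω => myX_sq_eq hπ_mem t ω
  have hint : ∀ a ∈ M.A, Integrable (fun ω => indA M η π t a ω * (M.mean a + η t a ω) ^ 2) P := by
    intro a ha
    refine myIndA_mul hη hπ_mem hπ_meas t a ?_
    have := ((memLp_const (M.mean a)).add (myMemL2_eta hη t ha)).integrable_sq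
    simpa using this
  rw [h1, integral_finset_sum _ hint]
  refine Finset.sum_congr rfl fun a ha => ?_
  have h2 : (fun ω => indA M η π t a ω * (M.mean a + η t a ω) ^ 2)
      = fun ω => M.mean a ^ 2 * indA M η π t a ω
          + (2 * M.mean a) * (indA M η π t a ω * η t a ω)
          + indA M η π t a ω * η t a ω ^ 2 := by
    funext ω; ring
  have hA : Integrable (fun ω => M.mean a ^ 2 * indA M η π t a ω) P :=
    (myIndA_int hη hπ_mem hπ_meas t a).const_mul _
  have hB : Integrable (fun ω => 2 * M.mean a * (indA M η π t a ω * η t a ω)) P :=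
    (myIndA_mul hη hπ_mem hπ_meas t a (myIntegrable_eta hη t ha)).const_mul _
  have hC : Integrable (fun ω => indA M η π t a ω * η t a ω ^ 2) P :=
    myIndA_mul hη hπ_mem hπ_meas t a (myIntegrable_eta_sq hη t ha)
  have hAB : Integrable (fun ω => M.mean a ^ 2 * indA M η π t a ω
      + 2 * M.mean a * (indA M η π t a ω * η t a ω)) P := hA.add hB
  rw [h2, integral_add hAB hC, integral_add hA hB,
    integral_const_mul, integral_const_mul, myIndA_eta hη hπ_mem hπ_meas t ha,
    myIndA_eta_sq hη hπ_mem hπ_meas t ha]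
  ring

lemma myMvObj_eq (ρ : ℝ) {T : ℕ} (hT : 0 < T) (x : ℕ → ℝ) :
    mvObj ρ T x = (∑ t ∈ Finset.range T, x t ^ 2)
      - (∑ t ∈ Finset.range T, x t) ^ 2 / T - ρ * ∑ t ∈ Finset.range T, x t := by
  have hT0 : (T:ℝ) ≠ 0 := Nat.cast_ne_zero.mpr hT.ne'
  rw [mvObj]
  have h1 : ∑ t ∈ Finset.range T, (x t - (∑ s ∈ Finset.range T, x s) / T) ^ 2
      = ∑ t ∈ Finset.range T, (x t ^ 2
          - 2 * ((∑ s ∈ Finset.range T, x s) / T) * x t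
          + ((∑ s ∈ Finset.range T, x s) / T) ^ 2) := by
    refine Finset.sum_congr rfl fun t _ => ?_
    ring
  rw [h1]
  rw [Finset.sum_add_distrib, Finset.sum_sub_distrib, ← Finset.mul_sum,
    Finset.sum_const, Finset.card_range, nsmul_eq_mul]
  field_simp
  ring

end RoundAux

/-- In the risk-aware linear bandit model, for any policy `π` the
expected proxy regret satisfies
`E[R̂_π(T)] ≤ ∑_{a∈A} E[τ_a(T)] (Δ_a + Γ_{a,*}²) + σ_{a*}²`,
where `E[R̂_π(T)] = E[ξ_π(T)] − E[ξ_{π̂*}(T)]`, `π̂*` always plays the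
mean-variance optimal action `a*`, `Γ_{a,*} = μ_a − μ_{a*}` and `σ_{a*}²` is the
variance of `a*`. -/


theorem proxy_regret_decomposition_bound
    (d : ℕ) (M : BanditModel d) (T : ℕ) (hT : 0 < T)
    (Ω : Type) [MeasurableSpace Ω] (P : Measure Ω) [IsProbabilityMeasure P]
    (η : ℕ → (Fin d → ℝ) → Ω → ℝ) (hη : IsNoise M P η)
    (π : Policy d) (hπ_mem : ∀ t h, π t h ∈ M.A) (hπ_meas : ∀ t, Measurable (π t))
    (astar : Fin d → ℝ) (hastar : astar ∈ M.A)
    (hopt : ∀ b ∈ M.A, M.mv astar ≤ M.mv b) :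
    (∫ ω, mvObj M.ρ T (fun t => polX M.θ η π ω t) ∂P)
        - (∫ ω, mvObj M.ρ T (fun t => astar ⬝ᵥ M.θ + η t astar ω) ∂P)
      ≤ (∑ a ∈ M.A,
          (∫ ω, playCount (fun t ω => polAct M.θ η π ω t) T a ω ∂P)
            * ((M.mv a - M.mv astar) + M.gap a astar ^ 2))
        + M.var astar := by
  classical
  have hT0 : (0:ℝ) < T := by exact_mod_cast hT
  have hTne : (T:ℝ) ≠ 0 := hT0.ne'
  -- abbreviations
  set c : ℝ := astar ⬝ᵥ M.θ with hc
  set vstar : ℝ := M.var astar with hvstar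
  set q : (Fin d → ℝ) → ℝ := fun a => ∑ t ∈ Finset.range T, ∫ ω, indA M η π t a ω ∂P with hq
  set Smu : ℝ := ∑ a ∈ M.A, q a * M.mean a with hSmu
  set S2 : ℝ := ∑ a ∈ M.A, q a * M.mean a ^ 2 with hS2
  set Vsum : ℝ := ∑ a ∈ M.A, q a * M.var a with hVsum
  -- L² facts for the policy rewards
  have hXL2 : ∀ t, MemLp (fun ω => polX M.θ η π ω t) 2 P :=
    fun t => myX_memL2 hη hπ_mem hπ_meas t
  have hSTL2 : MemLp (fun ω => ∑ t ∈ Finset.range T, polX M.θ η π ω t) 2 P :=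
    memLp_finset_sum _ fun t _ => hXL2 t
  have hSTint := hSTL2.integrable one_le_two
  have hST2int := hSTL2.integrable_sq
  -- expectations of the policy rewards per round
  have hIntX : ∀ t, ∫ ω, polX M.θ η π ω t ∂P
      = ∑ a ∈ M.A, (∫ ω, indA M η π t a ω ∂P) * M.mean a :=
    fun t => myIntX hη hπ_mem hπ_meas t
  have hIntX2 : ∀ t, ∫ ω, polX M.θ η π ω t ^ 2 ∂P
      = ∑ a ∈ M.A, (∫ ω, indA M η π t a ω ∂P) * (M.mean a ^ 2 + M.var a) :=
    fun t => myIntX_sq hη hπ_mem hπ_meas t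
  -- sum of played-count integrals
  have hplay : ∀ a, (∫ ω, playCount (fun t ω => polAct M.θ η π ω t) T a ω ∂P) = q a := by
    intro a
    have h1 : (fun ω => playCount (fun t ω => polAct M.θ η π ω t) T a ω)
        = fun ω => ∑ t ∈ Finset.range T, indA M η π t a ω := rfl
    rw [h1, integral_finset_sum _ (fun t _ => myIndA_int hη hπ_mem hπ_meas t a)]
  -- total mass
  have hqT : ∑ a ∈ M.A, q a = (T:ℝ) := by
    rw [hq, Finset.sum_comm]
    have h1 : ∀ t ∈ Finset.range T, ∑ a ∈ M.A, ∫ ω, indA M η π t a ω ∂P = 1 := by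
      intro t _
      rw [← integral_finset_sum _ (fun a _ => myIndA_int hη hπ_mem hπ_meas t a)]
      have h2 : (fun ω => ∑ a ∈ M.A, indA M η π t a ω) = fun _ => (1:ℝ) :=
        funext fun ω => myIndA_sum hπ_mem t ω
      rw [h2, integral_const]
      simp
    rw [Finset.sum_congr rfl h1]
    simp
  -- mean of total policy reward
  have hIntST : ∫ ω, (∑ t ∈ Finset.range T, polX M.θ η π ω t) ∂P = Smu := by
    rw [integral_finset_sum _ (fun t _ => (hXL2 t).integrable one_le_two),
      Finset.sum_congr rfl (fun t _ => hIntX t), Finset.sum_comm, hSmu, hq]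
    refine Finset.sum_congr rfl fun a _ => ?_
    rw [Finset.sum_mul]
  -- sum of second moments of policy rewards
  have hIntXsqSum : ∑ t ∈ Finset.range T, ∫ ω, polX M.θ η π ω t ^ 2 ∂P = S2 + Vsum := by
    rw [Finset.sum_congr rfl (fun t _ => hIntX2 t), Finset.sum_comm]
    have h1 : ∀ a ∈ M.A, ∑ t ∈ Finset.range T,
        (∫ ω, indA M η π t a ω ∂P) * (M.mean a ^ 2 + M.var a)
        = q a * M.mean a ^ 2 + q a * M.var a := by
      intro a _
      rw [← Finset.sum_mul, hq]
      ring
    rw [Finset.sum_congr rfl h1, Finset.sum_add_distrib, hS2, hVsum]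
  -- Jensen for the total policy reward
  have hjensen : (∫ ω, (∑ t ∈ Finset.range T, polX M.θ η π ω t) ∂P) ^ 2
      ≤ ∫ ω, (∑ t ∈ Finset.range T, polX M.θ η π ω t) ^ 2 ∂P := by
    have h0 := variance_nonneg (fun ω => ∑ t ∈ Finset.range T, polX M.θ η π ω t) P
    rw [variance_eq_sub hSTL2] at h0
    simp only [Pi.pow_apply] at h0
    linarith
  -- upper bound for the policy mvObj integral
  have hπint : ∫ ω, mvObj M.ρ T (fun t => polX M.θ η π ω t) ∂P
      = (∑ t ∈ Finset.range T, ∫ ω, polX M.θ η π ω t ^ 2 ∂P)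
        - (∫ ω, (∑ t ∈ Finset.range T, polX M.θ η π ω t) ^ 2 ∂P) / T
        - M.ρ * ∫ ω, (∑ t ∈ Finset.range T, polX M.θ η π ω t) ∂P := by
    have h1 : ∀ ω, mvObj M.ρ T (fun t => polX M.θ η π ω t)
        = (∑ t ∈ Finset.range T, polX M.θ η π ω t ^ 2)
          - (∑ t ∈ Finset.range T, polX M.θ η π ω t) ^ 2 / T
          - M.ρ * ∑ t ∈ Finset.range T, polX M.θ η π ω t :=
      fun ω => myMvObj_eq M.ρ hT _
    simp only [h1]
    have hA : Integrable (fun ω => ∑ t ∈ Finset.range T, polX M.θ η π ω t ^ 2) P :=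
      integrable_finset_sum _ fun t _ => (hXL2 t).integrable_sq
    have hB : Integrable (fun ω => (∑ t ∈ Finset.range T, polX M.θ η π ω t) ^ 2 / T) P :=
      hST2int.div_const _
    have hC : Integrable (fun ω => M.ρ * ∑ t ∈ Finset.range T, polX M.θ η π ω t) P :=
      hSTint.const_mul _
    have hAB : Integrable (fun ω => (∑ t ∈ Finset.range T, polX M.θ η π ω t ^ 2)
        - (∑ t ∈ Finset.range T, polX M.θ η π ω t) ^ 2 / T) P := hA.sub hB
    rw [integral_sub hAB hC, integral_sub hA hB, integral_div, integral_const_mul,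
      integral_finset_sum _ (fun t _ => (hXL2 t).integrable_sq)]
  have hπbound : ∫ ω, mvObj M.ρ T (fun t => polX M.θ η π ω t) ∂P
      ≤ (S2 + Vsum) - Smu ^ 2 / T - M.ρ * Smu := by
    rw [hπint, hIntXsqSum, hIntST]
    have h2 : Smu ^ 2 / T ≤ (∫ ω, (∑ t ∈ Finset.range T, polX M.θ η π ω t) ^ 2 ∂P) / T := by
      rw [div_le_div_iff_of_pos_right]
      · rw [← hIntST]; exact hjensen
      · exact hT0
    linarith
  -- the optimal-arm side
  have hYL2 : ∀ t : ℕ, MemLp (fun ω => c + η t astar ω) 2 P :=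
    fun t => (memLp_const c).add (myMemL2_eta hη t hastar)
  have hYint : ∀ t : ℕ, Integrable (fun ω => c + η t astar ω) P :=
    fun t => (integrable_const c).add (myIntegrable_eta hη t hastar)
  have hIntY : ∀ t : ℕ, ∫ ω, (c + η t astar ω) ∂P = c := by
    intro t
    rw [integral_add (integrable_const c) (myIntegrable_eta hη t hastar),
      myInt_eta hη t hastar, integral_const]
    simp
  have hIntY2 : ∀ t : ℕ, ∫ ω, (c + η t astar ω) ^ 2 ∂P = c ^ 2 + vstar := by
    intro t
    have h1 : (fun ω => (c + η t astar ω) ^ 2)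
        = fun ω => (c ^ 2 + 2 * c * η t astar ω) + η t astar ω ^ 2 := by
      funext ω; ring
    have hA : Integrable (fun ω => c ^ 2 + 2 * c * η t astar ω) P :=
      (integrable_const _).add ((myIntegrable_eta hη t hastar).const_mul _)
    rw [h1, integral_add hA (myIntegrable_eta_sq hη t hastar),
      integral_add (integrable_const _) ((myIntegrable_eta hη t hastar).const_mul _),
      integral_const_mul, myInt_eta hη t hastar, myInt_eta_sq hη t hastar, integral_const]
    simp [hvstar]
  have hYprod : ∀ s t : ℕ, s ≠ t →
      ∫ ω, (c + η s astar ω) * (c + η t astar ω) ∂P = c ^ 2 := by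
    intro s t hst
    have hne : ((s, (⟨astar, hastar⟩ : {a // a ∈ M.A})) : ℕ × {a // a ∈ M.A})
        ≠ (t, ⟨astar, hastar⟩) := by
      simp [hst]
    have hind0 := hη.indep.indepFun hne
    have hmeasadd : Measurable (fun x : ℝ => c + x) := measurable_const.add measurable_id
    have hind : IndepFun (fun ω => c + η s astar ω) (fun ω => c + η t astar ω) P :=
      hind0.comp hmeasadd hmeasadd
    calc ∫ ω, (c + η s astar ω) * (c + η t astar ω) ∂P
        = integral P ((fun ω => c + η s astar ω) * fun ω => c + η t astar ω) := rfl
      _ = (∫ ω, (c + η s astar ω) ∂P) * ∫ ω, (c + η t astar ω) ∂P :=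
          hind.integral_mul_eq_mul_integral (hYint s).aestronglyMeasurable (hYint t).aestronglyMeasurable
      _ = c ^ 2 := by rw [hIntY s, hIntY t]; ring
  have hYprodInt : ∀ s t : ℕ, Integrable (fun ω => (c + η s astar ω) * (c + η t astar ω)) P := by
    intro s t
    by_cases hst : s = t
    · subst hst
      have := (hYL2 s).integrable_sq
      refine this.congr (Filter.Eventually.of_forall fun ω => ?_)
      ring
    · have hne : ((s, (⟨astar, hastar⟩ : {a // a ∈ M.A})) : ℕ × {a // a ∈ M.A})
          ≠ (t, ⟨astar, hastar⟩) := by simp [hst]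
      have hind0 := hη.indep.indepFun hne
      have hmeasadd : Measurable (fun x : ℝ => c + x) := measurable_const.add measurable_id
      have hind : IndepFun (fun ω => c + η s astar ω) (fun ω => c + η t astar ω) P :=
        hind0.comp hmeasadd hmeasadd
      exact hind.integrable_mul (hYint s) (hYint t)
  have hYSTL2 : MemLp (fun ω => ∑ t ∈ Finset.range T, (c + η t astar ω)) 2 P :=
    memLp_finset_sum _ fun t _ => hYL2 t
  have hIntYST : ∫ ω, (∑ t ∈ Finset.range T, (c + η t astar ω)) ∂P = T * c := by
    rw [integral_finset_sum _ (fun t _ => hYint t), Finset.sum_congr rfl (fun t _ => hIntY t)]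
    simp [mul_comm]
  have hIntYST2 : ∫ ω, (∑ t ∈ Finset.range T, (c + η t astar ω)) ^ 2 ∂P
      = T * (T * c ^ 2 + vstar) := by
    have h1 : ∀ ω : Ω, (∑ t ∈ Finset.range T, (c + η t astar ω)) ^ 2
        = ∑ s ∈ Finset.range T, ∑ t ∈ Finset.range T,
            (c + η s astar ω) * (c + η t astar ω) := by
      intro ω
      rw [sq, Finset.sum_mul_sum]
    simp only [h1]
    rw [integral_finset_sum _ (fun s _ => integrable_finset_sum _ fun t _ => hYprodInt s t)]
    have h2 : ∀ s ∈ Finset.range T,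
        (∫ ω, ∑ t ∈ Finset.range T, (c + η s astar ω) * (c + η t astar ω) ∂P)
        = T * c ^ 2 + vstar := by
      intro s hs
      rw [integral_finset_sum _ (fun t _ => hYprodInt s t)]
      have h3 : ∀ t ∈ Finset.range T, ∫ ω, (c + η s astar ω) * (c + η t astar ω) ∂P
          = c ^ 2 + (if s = t then vstar else 0) := by
        intro t _
        by_cases hst : s = t
        · subst hst
          rw [if_pos rfl]
          have h4 : (fun ω => (c + η s astar ω) * (c + η s astar ω))
              = fun ω => (c + η s astar ω) ^ 2 := by
            funext ω; ring
          rw [h4, hIntY2 s]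
        · rw [if_neg hst, add_zero]
          exact hYprod s t hst
      rw [Finset.sum_congr rfl h3, Finset.sum_add_distrib,
        Finset.sum_ite_eq (Finset.range T) s (fun _ => vstar), if_pos hs]
      simp
      try ring
    rw [Finset.sum_congr rfl h2]
    simp
    try ring
  have hstarint : ∫ ω, mvObj M.ρ T (fun t => astar ⬝ᵥ M.θ + η t astar ω) ∂P
      = T * (c ^ 2 + vstar) - (T * (T * c ^ 2 + vstar)) / T - M.ρ * (T * c) := by
    have h1 : ∀ ω, mvObj M.ρ T (fun t => astar ⬝ᵥ M.θ + η t astar ω)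
        = (∑ t ∈ Finset.range T, (c + η t astar ω) ^ 2)
          - (∑ t ∈ Finset.range T, (c + η t astar ω)) ^ 2 / T
          - M.ρ * ∑ t ∈ Finset.range T, (c + η t astar ω) :=
      fun ω => myMvObj_eq M.ρ hT _
    simp only [h1]
    have hA : Integrable (fun ω => ∑ t ∈ Finset.range T, (c + η t astar ω) ^ 2) P :=
      integrable_finset_sum _ fun t _ => (hYL2 t).integrable_sq
    have hB : Integrable (fun ω => (∑ t ∈ Finset.range T, (c + η t astar ω)) ^ 2 / T) P :=
      hYSTL2.integrable_sq.div_const _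
    have hC : Integrable (fun ω => M.ρ * ∑ t ∈ Finset.range T, (c + η t astar ω)) P :=
      (hYSTL2.integrable one_le_two).const_mul _
    have hAB : Integrable (fun ω => (∑ t ∈ Finset.range T, (c + η t astar ω) ^ 2)
        - (∑ t ∈ Finset.range T, (c + η t astar ω)) ^ 2 / T) P := hA.sub hB
    rw [integral_sub hAB hC, integral_sub hA hB, integral_div, integral_const_mul,
      integral_finset_sum _ (fun t _ => (hYL2 t).integrable_sq),
      Finset.sum_congr rfl (fun t _ => hIntY2 t), hIntYST, hIntYST2]
    simp
    try ring
  -- rewrite the right-hand side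
  have hR : (∑ a ∈ M.A,
      (∫ ω, playCount (fun t ω => polAct M.θ η π ω t) T a ω ∂P)
        * ((M.mv a - M.mv astar) + M.gap a astar ^ 2))
      = Vsum - M.ρ * Smu - M.mv astar * T + (S2 - 2 * c * Smu + c ^ 2 * T) := by
    have h0 : ∀ a ∈ M.A,
        (∫ ω, playCount (fun t ω => polAct M.θ η π ω t) T a ω ∂P)
          * ((M.mv a - M.mv astar) + M.gap a astar ^ 2)
        = q a * M.var a - M.ρ * (q a * M.mean a) - M.mv astar * q a
          + (q a * M.mean a ^ 2 - 2 * c * (q a * M.mean a) + c ^ 2 * q a) := by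
      intro a _
      rw [hplay a]
      simp only [BanditModel.mv, BanditModel.gap, hc]
      have hmc : M.mean astar = c := rfl
      rw [hmc]
      ring
    rw [Finset.sum_congr rfl h0]
    simp only [Finset.sum_add_distrib, Finset.sum_sub_distrib, ← Finset.mul_sum]
    rw [hqT, ← hVsum, ← hSmu, ← hS2]
    try ring
  -- final algebra
  have hmvstar : M.mv astar = vstar - M.ρ * c := by
    simp only [BanditModel.mv, hvstar, hc]
    rfl
  have hdivT : (T * (T * c ^ 2 + vstar)) / T = T * c ^ 2 + vstar := by
    field_simp
  have hkey : 2 * c * Smu - c ^ 2 * T ≤ Smu ^ 2 / T := by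
    rw [le_div_iff₀ hT0]
    nlinarith [sq_nonneg (Smu - c * T)]
  rw [hR, hstarint, hdivT, hmvstar]
  have := hπbound
  nlinarith [hkey, this]
end
end

section
/- G-optimal exploration design bound: Let A ⊂ ℝ^d be a finite set of vectors, Q : A → [0,1] a probability distribution on A such that W = Σ_{a∈A} Q(a) a aᵀ is positive definite, and set g = max_{a∈A} aᵀ W⁻¹ a. Let c > 0, ε > 0, and let n : A → ℕ satisfy n_a ≥ c·g·Q(a)/ε² for all a ∈ A. Then V = Σ_{a∈A} n_a a aᵀ is positive definite and for every a ∈ A, aᵀ V⁻¹ a ≤ ε²/c. -/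
open Matrix
open scoped BigOperators

private lemma dot_sum' {d : ℕ} {ι : Type*} [DecidableEq ι] (A : Finset ι) (x : Fin d → ℝ)
    (F : ι → Fin d → ℝ) : x ⬝ᵥ (∑ a ∈ A, F a) = ∑ a ∈ A, x ⬝ᵥ F a := by
  induction A using Finset.induction with
  | empty => simp
  | insert _ _ h ih => simp [Finset.sum_insert h, dotProduct_add, ih]

private lemma quad_sum' {d : ℕ} (A : Finset (Fin d → ℝ)) (f : (Fin d → ℝ) → ℝ) (x y : Fin d → ℝ) :
    x ⬝ᵥ ((∑ a ∈ A, f a • vecMulVec a a) *ᵥ y) = ∑ a ∈ A, f a * ((a ⬝ᵥ x) * (a ⬝ᵥ y)) := by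
  have h1 : (∑ a ∈ A, f a • vecMulVec a a) *ᵥ y = ∑ a ∈ A, f a • (vecMulVec a a *ᵥ y) := by
    induction A using Finset.induction with
    | empty => simp [Matrix.zero_mulVec]
    | insert _ _ h ih => simp [Finset.sum_insert h, Matrix.add_mulVec, ih, smul_mulVec]
  rw [h1, dot_sum']
  refine Finset.sum_congr rfl fun a _ => ?_
  rw [dotProduct_smul]
  have : vecMulVec a a *ᵥ y = (a ⬝ᵥ y) • a := by
    ext i
    simp only [Matrix.mulVec, Matrix.vecMulVec_apply, dotProduct, Pi.smul_apply, smul_eq_mul,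
      Finset.sum_mul]
    exact Finset.sum_congr rfl fun j _ => by ring
  rw [this, dotProduct_smul, smul_eq_mul, smul_eq_mul, dotProduct_comm a x]
  ring

private lemma herm_sum' {d : ℕ} (A : Finset (Fin d → ℝ)) (f : (Fin d → ℝ) → ℝ) :
    (∑ a ∈ A, f a • vecMulVec a a).IsHermitian := by
  refine Matrix.IsHermitian.ext fun i j => ?_
  simp [Matrix.conjTranspose_apply, Matrix.sum_apply, Matrix.vecMulVec_apply, mul_comm,
    Finset.sum_apply]

private lemma pd_quad_nonneg {d : ℕ} {M : Matrix (Fin d) (Fin d) ℝ} (hM : M.PosDef)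
    (x : Fin d → ℝ) : 0 ≤ x ⬝ᵥ M *ᵥ x := by
  rcases eq_or_ne x 0 with h | h
  · simp [h]
  · have := hM.dotProduct_mulVec_pos h
    simpa using this.le

/-- G-optimal exploration design bound.  Let `A ⊆ ℝ^d` be finite,
`Q` a probability distribution on `A` whose design matrix `W = ∑_a Q(a) a aᵀ` is
positive definite, and `g = max_{a∈A} aᵀ W⁻¹ a`.  If `n_a ≥ c g Q(a) / ε²` for
all `a ∈ A`, then `V = ∑_a n_a a aᵀ` is positive definite and
`aᵀ V⁻¹ a ≤ ε² / c`. -/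
theorem g_optimal_exploration_bound {d : ℕ} (A : Finset (Fin d → ℝ))
    (hA : A.Nonempty) (Q : (Fin d → ℝ) → ℝ)
    (hQ0 : ∀ a ∈ A, 0 ≤ Q a) (hQ1 : ∑ a ∈ A, Q a = 1)
    (W : Matrix (Fin d) (Fin d) ℝ) (hW : W = ∑ a ∈ A, Q a • vecMulVec a a)
    (hWpd : W.PosDef)
    (g : ℝ) (hg : g = A.sup' hA fun a => a ⬝ᵥ (W⁻¹ *ᵥ a))
    (c ε : ℝ) (hc : 0 < c) (hε : 0 < ε)
    (n : (Fin d → ℝ) → ℕ) (hn : ∀ a ∈ A, c * g * Q a / ε ^ 2 ≤ (n a : ℝ))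
    (V : Matrix (Fin d) (Fin d) ℝ) (hV : V = ∑ a ∈ A, (n a : ℝ) • vecMulVec a a) :
    V.PosDef ∧ ∀ a ∈ A, a ⬝ᵥ (V⁻¹ *ᵥ a) ≤ ε ^ 2 / c := by
  have hWinv : W⁻¹.PosDef := hWpd.inv
  have hWq : ∀ x, x ⬝ᵥ W *ᵥ x = ∑ a ∈ A, Q a * ((a ⬝ᵥ x) * (a ⬝ᵥ x)) := fun x => by
    rw [hW]; exact quad_sum' A Q x x
  have hVq : ∀ x, x ⬝ᵥ V *ᵥ x = ∑ a ∈ A, (n a : ℝ) * ((a ⬝ᵥ x) * (a ⬝ᵥ x)) := fun x => by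
    rw [hV]; exact quad_sum' A _ x x
  have hga : ∀ a ∈ A, a ⬝ᵥ (W⁻¹ *ᵥ a) ≤ g := fun a ha => hg ▸ Finset.le_sup' (fun a => a ⬝ᵥ (W⁻¹ *ᵥ a)) ha
  have hg0 : 0 ≤ g := by
    obtain ⟨a, ha⟩ := hA
    exact le_trans (pd_quad_nonneg hWinv a) (hga a ha)
  by_cases hgz : g = 0
  · -- degenerate case: every a ∈ A is 0
    have hall : ∀ a ∈ A, a = (0 : Fin d → ℝ) := by
      intro a ha
      by_contra hne
      have h1 := hWinv.dotProduct_mulVec_pos hne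
      simp only [star_trivial] at h1
      have h2 := hga a ha
      rw [hgz] at h2
      linarith
    have hVW : V = W := by
      rw [hV, hW]
      refine Finset.sum_congr rfl fun a ha => ?_
      rw [hall a ha]
      have h0 : vecMulVec (0 : Fin d → ℝ) (0 : Fin d → ℝ) = (0 : Matrix (Fin d) (Fin d) ℝ) := by
        ext i j; simp [Matrix.vecMulVec_apply]
      simp [h0]
    refine ⟨hVW ▸ hWpd, fun a ha => ?_⟩
    rw [hall a ha]
    simp only [zero_dotProduct]
    positivity
  · have hgpos : 0 < g := lt_of_le_of_ne hg0 (Ne.symm hgz)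
    set k : ℝ := c * g / ε ^ 2 with hk
    have hkpos : 0 < k := by positivity
    have hkey : ∀ x, k * (x ⬝ᵥ W *ᵥ x) ≤ x ⬝ᵥ V *ᵥ x := by
      intro x
      rw [hWq, hVq, Finset.mul_sum]
      refine Finset.sum_le_sum fun a ha => ?_
      have h1 : k * Q a ≤ (n a : ℝ) := by
        have h2 := hn a ha
        calc k * Q a = c * g * Q a / ε ^ 2 := by rw [hk]; ring
          _ ≤ (n a : ℝ) := h2
      have h3 : (0 : ℝ) ≤ (a ⬝ᵥ x) * (a ⬝ᵥ x) := mul_self_nonneg _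
      calc k * (Q a * ((a ⬝ᵥ x) * (a ⬝ᵥ x))) = (k * Q a) * ((a ⬝ᵥ x) * (a ⬝ᵥ x)) := by ring
        _ ≤ (n a : ℝ) * ((a ⬝ᵥ x) * (a ⬝ᵥ x)) := mul_le_mul_of_nonneg_right h1 h3
    have hVpd : V.PosDef := by
      refine Matrix.PosDef.of_dotProduct_mulVec_pos (hV ▸ herm_sum' A _) fun x hx => ?_
      simp only [star_trivial]
      calc (0 : ℝ) < k * (x ⬝ᵥ W *ᵥ x) := by
            refine mul_pos hkpos ?_
            have := hWpd.dotProduct_mulVec_pos hx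
            simpa using this
        _ ≤ x ⬝ᵥ V *ᵥ x := hkey x
    refine ⟨hVpd, fun a ha => ?_⟩
    set y : Fin d → ℝ := V⁻¹ *ᵥ a with hy
    set w : Fin d → ℝ := W⁻¹ *ᵥ a with hw
    have hVy : V *ᵥ y = a := by
      rw [hy, mulVec_mulVec, Matrix.mul_nonsing_inv _ ((Matrix.isUnit_iff_isUnit_det V).1 hVpd.isUnit), one_mulVec]
    have hWw : W *ᵥ w = a := by
      rw [hw, mulVec_mulVec, Matrix.mul_nonsing_inv _ ((Matrix.isUnit_iff_isUnit_det W).1 hWpd.isUnit), one_mulVec]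
    set t : ℝ := a ⬝ᵥ y with ht
    have hyV : y ⬝ᵥ V *ᵥ y = t := by rw [hVy, ht, dotProduct_comm]
    have ht0 : 0 ≤ t := hyV ▸ pd_quad_nonneg hVpd y
    have hyW0 : 0 ≤ y ⬝ᵥ W *ᵥ y := pd_quad_nonneg hWpd y
    have hwW0 : 0 ≤ w ⬝ᵥ W *ᵥ w := pd_quad_nonneg hWpd w
    have hyWle : y ⬝ᵥ W *ᵥ y ≤ t / k := by
      rw [le_div_iff₀ hkpos]
      calc (y ⬝ᵥ W *ᵥ y) * k = k * (y ⬝ᵥ W *ᵥ y) := by ring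
        _ ≤ y ⬝ᵥ V *ᵥ y := hkey y
        _ = t := hyV
    have hwWle : w ⬝ᵥ W *ᵥ w ≤ g := by
      have : w ⬝ᵥ W *ᵥ w = a ⬝ᵥ (W⁻¹ *ᵥ a) := by rw [hWw, ← hw, dotProduct_comm]
      rw [this]; exact hga a ha
    have htW : y ⬝ᵥ W *ᵥ w = t := by rw [hWw, ht, dotProduct_comm]
    -- Cauchy-Schwarz for the quadratic form W
    have hcs : (y ⬝ᵥ W *ᵥ w) ^ 2 ≤ (y ⬝ᵥ W *ᵥ y) * (w ⬝ᵥ W *ᵥ w) := by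
      have e1 : y ⬝ᵥ W *ᵥ w = ∑ a ∈ A, Q a * ((a ⬝ᵥ y) * (a ⬝ᵥ w)) := by
        rw [hW]; exact quad_sum' A Q y w
      rw [e1, hWq, hWq]
      calc (∑ a ∈ A, Q a * ((a ⬝ᵥ y) * (a ⬝ᵥ w))) ^ 2
          = (∑ a ∈ A, (Real.sqrt (Q a) * (a ⬝ᵥ y)) * (Real.sqrt (Q a) * (a ⬝ᵥ w))) ^ 2 := by
            congr 1
            refine Finset.sum_congr rfl fun a ha => ?_
            rw [show (Real.sqrt (Q a) * (a ⬝ᵥ y)) * (Real.sqrt (Q a) * (a ⬝ᵥ w))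
                = (Real.sqrt (Q a) * Real.sqrt (Q a)) * ((a ⬝ᵥ y) * (a ⬝ᵥ w)) by ring,
              Real.mul_self_sqrt (hQ0 a ha)]
        _ ≤ (∑ a ∈ A, (Real.sqrt (Q a) * (a ⬝ᵥ y)) ^ 2) *
            (∑ a ∈ A, (Real.sqrt (Q a) * (a ⬝ᵥ w)) ^ 2) :=
            Finset.sum_mul_sq_le_sq_mul_sq A _ _
        _ = (∑ a ∈ A, Q a * ((a ⬝ᵥ y) * (a ⬝ᵥ y))) * (∑ a ∈ A, Q a * ((a ⬝ᵥ w) * (a ⬝ᵥ w))) := by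
            congr 1 <;>
            · refine Finset.sum_congr rfl fun a ha => ?_
              rw [mul_pow, Real.sq_sqrt (hQ0 a ha), sq]
    have hmain : t ^ 2 ≤ (t / k) * g := by
      calc t ^ 2 = (y ⬝ᵥ W *ᵥ w) ^ 2 := by rw [htW]
        _ ≤ (y ⬝ᵥ W *ᵥ y) * (w ⬝ᵥ W *ᵥ w) := hcs
        _ ≤ (t / k) * g := mul_le_mul hyWle hwWle hwW0 (by positivity)
    have hgk : g / k = ε ^ 2 / c := by
      rw [hk]
      field_simp
    show t ≤ ε ^ 2 / c
    rcases eq_or_lt_of_le ht0 with h | h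
    · rw [← h]; positivity
    · rw [← hgk]
      have h2 : t * t ≤ t * (g / k) := by
        calc t * t = t ^ 2 := (sq t).symm
          _ ≤ (t / k) * g := hmain
          _ = t * (g / k) := by ring
      exact le_of_mul_le_mul_left h2 h
end
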